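/- arXiv:2504.11656 — 3 statements merged into one kernel-verified Lean document; each statement's English description precedes it below -/
import Mathlib

section
/- Let Δ ≥ 3 and let T be a tree rooted at r with maximum degree at most Δ. Suppose there are m distinct leaves x_1, ..., x_m with d(r, x_i) = a for all i, for some a ≥ 1. Then there exists i ∈ [m] such that T contains leaf-to-leaf paths of at least log_{Δ−1}(m/Δ) + 2 distinct lengths between 0 and 2a, all having x_i as an endpoint. -/
section AuxWalk
namespace StmtAux
open SimpleGraph Finset
variable {V : Type*} {G : SimpleGraph V}

lemma length_drop' {u v : V} (p : G.Walk u v) : ∀ n, (p.drop n).length = p.length - n := by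
  induction p with
  | nil => intro n; cases n <;> simp [SimpleGraph.Walk.drop]
  | cons h q ih =>
    intro n
    cases n with
    | zero => simp [SimpleGraph.Walk.drop]
    | succ n =>
      show ((q.drop n).copy (by rw [SimpleGraph.Walk.getVert_cons_succ]) rfl).length = _
      rw [SimpleGraph.Walk.length_copy, ih]
      simp [SimpleGraph.Walk.length_cons]

lemma getVert_drop' {u v : V} (p : G.Walk u v) : ∀ n i, (p.drop n).getVert i = p.getVert (n + i) := by
  induction p with
  | nil => intro n i; cases n <;> simp [SimpleGraph.Walk.drop, SimpleGraph.Walk.getVert]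
  | cons h q ih =>
    intro n i
    cases n with
    | zero => simp [SimpleGraph.Walk.drop]
    | succ n =>
      show ((q.drop n).copy (by rw [SimpleGraph.Walk.getVert_cons_succ]) rfl).getVert i = _
      rw [SimpleGraph.Walk.getVert_copy, ih]
      rw [show n + 1 + i = (n + i) + 1 by omega, SimpleGraph.Walk.getVert_cons_succ]

lemma isPath_of_getVert_injOn {u v : V} (p : G.Walk u v)
    (h : ∀ a ≤ p.length, ∀ b ≤ p.length, p.getVert a = p.getVert b → a = b) : p.IsPath := by
  induction p with
  | nil => simp
  | cons hadj q ih =>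
    rw [SimpleGraph.Walk.cons_isPath_iff]
    constructor
    · apply ih
      intro a ha b hb hab
      have := h (a+1) (by simp [SimpleGraph.Walk.length_cons]; omega) (b+1)
        (by simp [SimpleGraph.Walk.length_cons]; omega)
        (by rwa [SimpleGraph.Walk.getVert_cons_succ, SimpleGraph.Walk.getVert_cons_succ])
      omega
    · intro hu
      rw [SimpleGraph.Walk.mem_support_iff_exists_getVert] at hu
      obtain ⟨n, hn, hnle⟩ := hu
      have := h 0 (by omega) (n+1) (by simp [SimpleGraph.Walk.length_cons]; omega)
        (by rw [SimpleGraph.Walk.getVert_cons_succ, SimpleGraph.Walk.getVert_zero, hn])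
      omega

noncomputable def prefixWalk {r y : V} (p : G.Walk r y) (n : ℕ) (hn : n ≤ p.length) :
    G.Walk r (p.getVert n) :=
  ((p.reverse.drop (p.length - n)).copy
    (by rw [SimpleGraph.Walk.getVert_reverse]; congr 1; omega) rfl).reverse

lemma prefixWalk_length {r y : V} (p : G.Walk r y) (n : ℕ) (hn : n ≤ p.length) :
    (prefixWalk p n hn).length = n := by
  unfold prefixWalk
  rw [SimpleGraph.Walk.length_reverse, SimpleGraph.Walk.length_copy, length_drop',
    SimpleGraph.Walk.length_reverse]
  omega

lemma geodesic_getVert_dist {r y : V} (p : G.Walk r y) (hl : p.length = G.dist r y)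
    {n : ℕ} (hn : n ≤ p.length) : G.dist r (p.getVert n) = n := by
  have h1 : G.dist r (p.getVert n) ≤ n := by
    have := SimpleGraph.dist_le (prefixWalk p n hn)
    rwa [prefixWalk_length] at this
  rcases Nat.lt_or_ge (G.dist r (p.getVert n)) n with hlt | hge
  · exfalso
    have hreach : G.Reachable r (p.getVert n) := ⟨prefixWalk p n hn⟩
    obtain ⟨w', hw'⟩ := hreach.exists_walk_length_eq_dist
    have := SimpleGraph.dist_le (w'.append (p.drop n))
    rw [SimpleGraph.Walk.length_append, hw', length_drop'] at this
    omega
  · omega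

lemma unique_parent (hG : G.IsTree) (r : V) {d : ℕ} {u v₁ v₂ : V}
    (h1 : G.dist r v₁ = d) (h2 : G.dist r v₂ = d) (hu : G.dist r u = d + 1)
    (a1 : G.Adj v₁ u) (a2 : G.Adj v₂ u) : v₁ = v₂ := by
  have key : ∀ v : V, G.dist r v = d → G.Adj v u →
      ∃ q : G.Walk r u, q.IsPath ∧ q.length = d + 1 ∧ q.getVert d = v := by
    intro v hv hadj
    obtain ⟨q, hqp, hql⟩ := hG.isConnected.exists_path_of_dist r v
    have hqlen : q.length = d := by rw [hql, hv]
    have hunotin : u ∉ q.support := by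
      intro hmem
      rw [SimpleGraph.Walk.mem_support_iff_exists_getVert] at hmem
      obtain ⟨i, hi, hile⟩ := hmem
      have := geodesic_getVert_dist q (by rw [hql]) hile
      rw [hi, hu] at this
      omega
    have hcp : (q.concat hadj).IsPath := by
      rw [← SimpleGraph.Walk.isPath_reverse_iff, SimpleGraph.Walk.reverse_concat]
      exact hqp.reverse.cons (by
        rw [SimpleGraph.Walk.support_reverse, List.mem_reverse]; exact hunotin)
    refine ⟨q.concat hadj, hcp, ?_, ?_⟩
    · rw [SimpleGraph.Walk.length_concat, hqlen]
    · rw [SimpleGraph.Walk.concat_eq_append, SimpleGraph.Walk.getVert_append]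
      simp [hqlen]
  obtain ⟨q1, hq1p, hq1l, hq1v⟩ := key v₁ h1 a1
  obtain ⟨q2, hq2p, hq2l, hq2v⟩ := key v₂ h2 a2
  have : (⟨q1, hq1p⟩ : G.Path r u) = ⟨q2, hq2p⟩ := hG.IsAcyclic.path_unique _ _
  have hq : q1 = q2 := congrArg Subtype.val this
  rw [← hq1v, ← hq2v, hq]

end StmtAux
end AuxWalk

namespace Stage3
open Finset

variable {n : ℕ} {β : Type*} [DecidableEq β] [DecidableEq ℕ]

lemma combA (D a : ℕ) (hD : 2 ≤ D) (A : Fin n → ℕ → β) (M : Fin n → Fin n → ℕ)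
    (hle : ∀ i j, M i j ≤ a)
    (hchar : ∀ i j d, d ≤ a → (d ≤ M i j ↔ A i d = A j d))
    (hlt : ∀ i j, i ≠ j → M i j < a)
    (hbr : ∀ (S : Finset (Fin n)) (b : ℕ), 1 ≤ b → b < a →
      (∀ i ∈ S, ∀ j ∈ S, b ≤ M i j) → (S.image fun i => A i (b+1)).card ≤ D) :
    ∀ (N : ℕ) (S : Finset (Fin n)), S.card ≤ N → S.Nonempty → ∀ b, 1 ≤ b →
      (∀ i ∈ S, ∀ j ∈ S, b ≤ M i j) →
      ∃ i ∈ S, D * S.card ≤ D ^ (S.image fun j => M i j).card := by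
  have hMdiag : ∀ i, M i i = a := fun i =>
    le_antisymm (hle i i) ((hchar i i a le_rfl).mpr rfl)
  intro N
  induction N with
  | zero =>
    intro S hS hne
    exact absurd (Finset.card_pos.mpr hne) (by omega)
  | succ N ih =>
    intro S hcard hne b hb hS
    by_cases h1 : S.card ≤ 1
    · have hS1 : S.card = 1 := le_antisymm h1 (Finset.card_pos.mpr hne)
      obtain ⟨i, rfl⟩ := Finset.card_eq_one.mp hS1
      refine ⟨i, Finset.mem_singleton_self i, ?_⟩
      rw [Finset.image_singleton, Finset.card_singleton, Finset.card_singleton, pow_one, mul_one]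
    · -- S has at least two elements
      have h2 : 2 ≤ S.card := by omega
      -- the minimum pairwise value b*
      set T : Finset ℕ := ((S ×ˢ S).filter fun q => q.1 ≠ q.2).image fun q => M q.1 q.2 with hT
      have hTne : T.Nonempty := by
        obtain ⟨i₀, hi₀, j₀, hj₀, hne'⟩ := Finset.one_lt_card.mp h2
        exact ⟨M i₀ j₀, Finset.mem_image.mpr ⟨(i₀, j₀),
          Finset.mem_filter.mpr ⟨Finset.mem_product.mpr ⟨hi₀, hj₀⟩, hne'⟩, rfl⟩⟩
      set bs := T.min' hTne with hbs
      obtain ⟨q₀, hq₀, hq₀eq⟩ := Finset.mem_image.mp (T.min'_mem hTne)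
      obtain ⟨hq₀S, hq₀ne⟩ := Finset.mem_filter.mp hq₀
      obtain ⟨hq₀1, hq₀2⟩ := Finset.mem_product.mp hq₀S
      have hbsle : ∀ i ∈ S, ∀ j ∈ S, i ≠ j → bs ≤ M i j := by
        intro i hi j hj hij
        exact T.min'_le _ (Finset.mem_image.mpr ⟨(i, j),
          Finset.mem_filter.mpr ⟨Finset.mem_product.mpr ⟨hi, hj⟩, hij⟩, rfl⟩)
      have hbb : b ≤ bs := by
        rw [hbs, ← hq₀eq]; exact hS _ hq₀1 _ hq₀2
      have hbsa : bs < a := by rw [hbs, ← hq₀eq]; exact hlt _ _ hq₀ne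
      have hbsall : ∀ i ∈ S, ∀ j ∈ S, bs ≤ M i j := by
        intro i hi j hj
        rcases eq_or_ne i j with rfl | hij
        · rw [hMdiag]; omega
        · exact hbsle i hi j hj hij
      -- classes
      set g : Fin n → β := fun i => A i (bs + 1) with hg
      have hclass : ∀ i ∈ S, ∀ j ∈ S, (g i = g j ↔ bs + 1 ≤ M i j) := by
        intro i _ j _
        exact (hchar i j (bs+1) (by omega)).symm
      have hc : (S.image g).card ≤ D := hbr S bs (by omega) hbsa hbsall
      obtain ⟨v, hv, hvmax⟩ := (S.image g).exists_max_image
        (fun v => (S.filter fun i => g i = v).card) ⟨g q₀.1, Finset.mem_image_of_mem g hq₀1⟩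
      set C := S.filter fun i => g i = v with hC
      have hCsub : C ⊆ S := Finset.filter_subset _ _
      have hSC : S.card ≤ (S.image g).card * C.card := by
        have hsum := Finset.sum_le_card_nsmul (S.image g)
            (fun w => (S.filter fun i => g i = w).card) C.card (fun w hw => hvmax w hw)
        rw [smul_eq_mul] at hsum
        calc S.card = ∑ w ∈ S.image g, (S.filter fun i => g i = w).card :=
              Finset.card_eq_sum_card_fiberwise (fun i hi => Finset.mem_image_of_mem g hi)
          _ ≤ _ := hsum
      have hCne : C.Nonempty := by
        obtain ⟨i', hi', hgi'⟩ := Finset.mem_image.mp hv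
        exact ⟨i', Finset.mem_filter.mpr ⟨hi', hgi'⟩⟩
      have hgne : g q₀.1 ≠ g q₀.2 := by
        intro hgeq
        have := (hclass _ hq₀1 _ hq₀2).mp hgeq
        omega
      have hCneS : C ≠ S := by
        intro hCS
        have h1' : q₀.1 ∈ C := hCS ▸ hq₀1
        have h2' : q₀.2 ∈ C := hCS ▸ hq₀2
        exact hgne ((Finset.mem_filter.mp h1').2.trans (Finset.mem_filter.mp h2').2.symm)
      have hClt : C.card < S.card := Finset.card_lt_card (hCsub.ssubset_of_ne hCneS)
      have hCpairs : ∀ i ∈ C, ∀ j ∈ C, bs + 1 ≤ M i j := by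
        intro i hi j hj
        exact (hclass i (hCsub hi) j (hCsub hj)).mp
          ((Finset.mem_filter.mp hi).2.trans (Finset.mem_filter.mp hj).2.symm)
      obtain ⟨i, hiC, hrec⟩ := ih C (by omega) hCne (bs+1) (by omega) hCpairs
      refine ⟨i, hCsub hiC, ?_⟩
      -- there is j ∈ S \ C
      have hjex : ∃ j ∈ S, j ∉ C := by
        by_contra hno
        push_neg at hno
        exact hCneS (Finset.Subset.antisymm hCsub (fun j hj => hno j hj))
      obtain ⟨j, hjS, hjC⟩ := hjex
      have hMij : M i j = bs := by
        have hgneij : g i ≠ g j := by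
          intro hgeq
          exact hjC (Finset.mem_filter.mpr ⟨hjS, hgeq ▸ (Finset.mem_filter.mp hiC).2⟩)
        have hne' : i ≠ j := fun h => hgneij (h ▸ rfl)
        have h1' := hbsle i (hCsub hiC) j hjS hne'
        have h2' : ¬ (bs + 1 ≤ M i j) := fun h => hgneij ((hclass i (hCsub hiC) j hjS).mpr h)
        omega
      have hnotmem : bs ∉ C.image fun j' => M i j' := by
        intro hmem
        obtain ⟨j', hj', hMeq⟩ := Finset.mem_image.mp hmem
        have := hCpairs i hiC j' hj'
        omega
      have hins : insert bs (C.image fun j' => M i j') ⊆ S.image fun j' => M i j' := by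
        apply Finset.insert_subset
        · exact Finset.mem_image.mpr ⟨j, hjS, hMij⟩
        · exact Finset.image_subset_image hCsub
      have hk : (C.image fun j' => M i j').card + 1 ≤ (S.image fun j' => M i j').card := by
        rw [← Finset.card_insert_of_notMem hnotmem]
        exact Finset.card_le_card hins
      calc D * S.card ≤ D * ((S.image g).card * C.card) := Nat.mul_le_mul_left _ hSC
        _ = (S.image g).card * (D * C.card) := by ring
        _ ≤ D * D ^ (C.image fun j' => M i j').card := Nat.mul_le_mul hc hrec
        _ = D ^ ((C.image fun j' => M i j').card + 1) := by rw [pow_succ]; ring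
        _ ≤ D ^ (S.image fun j' => M i j').card := Nat.pow_le_pow_right (by omega) hk

end Stage3

namespace B
open Finset

lemma combB {n : ℕ} {β : Type*} [DecidableEq β] (D a : ℕ) (hD : 2 ≤ D) (ha : 1 ≤ a)
    (hn : 0 < n) (A : Fin n → ℕ → β) (M : Fin n → Fin n → ℕ)
    (hle : ∀ i j, M i j ≤ a)
    (hchar : ∀ i j d, d ≤ a → (d ≤ M i j ↔ A i d = A j d))
    (hlt : ∀ i j, i ≠ j → M i j < a)
    (hbr : ∀ (S : Finset (Fin n)) (b : ℕ), 1 ≤ b → b < a →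
      (∀ i ∈ S, ∀ j ∈ S, b ≤ M i j) → (S.image fun i => A i (b+1)).card ≤ D)
    (hbr0 : ∀ S : Finset (Fin n), (S.image fun i => A i 1).card ≤ D + 1) :
    ∃ i : Fin n, D ^ 2 * n ≤ (D + 1) * D ^ ((Finset.univ.image fun j => M i j).card) := by
  have hMdiag : ∀ i, M i i = a := fun i =>
    le_antisymm (hle i i) ((hchar i i a le_rfl).mpr rfl)
  have hcombA := Stage3.combA D a hD A M hle hchar hlt hbr
  set S : Finset (Fin n) := Finset.univ with hSdef
  have hScard : S.card = n := Finset.card_univ.trans (Fintype.card_fin n)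
  by_cases hn1 : n = 1
  · -- single leaf
    obtain ⟨i⟩ : Nonempty (Fin n) := ⟨⟨0, hn⟩⟩
    refine ⟨i, ?_⟩
    have hk : 1 ≤ (S.image fun j => M i j).card := by
      apply Finset.card_pos.mpr
      exact ⟨M i i, Finset.mem_image_of_mem _ (Finset.mem_univ i)⟩
    calc D ^ 2 * n = D ^ 2 := by rw [hn1, mul_one]
      _ ≤ (D + 1) * D ^ 1 := by nlinarith
      _ ≤ (D + 1) * D ^ (S.image fun j => M i j).card :=
          Nat.mul_le_mul_left _ (Nat.pow_le_pow_right (by omega) hk)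
  · have hn2 : 2 ≤ n := by omega
    -- minimum pairwise value
    set T : Finset ℕ := ((S ×ˢ S).filter fun q => q.1 ≠ q.2).image fun q => M q.1 q.2 with hT
    have hTne : T.Nonempty := by
      obtain ⟨i₀, hi₀, j₀, hj₀, hne'⟩ := Finset.one_lt_card.mp (by omega : 1 < S.card)
      exact ⟨M i₀ j₀, Finset.mem_image.mpr ⟨(i₀, j₀),
        Finset.mem_filter.mpr ⟨Finset.mem_product.mpr ⟨hi₀, hj₀⟩, hne'⟩, rfl⟩⟩
    set bs := T.min' hTne with hbs
    obtain ⟨q₀, hq₀, hq₀eq⟩ := Finset.mem_image.mp (T.min'_mem hTne)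
    obtain ⟨hq₀S, hq₀ne⟩ := Finset.mem_filter.mp hq₀
    obtain ⟨hq₀1, hq₀2⟩ := Finset.mem_product.mp hq₀S
    have hbsle : ∀ i j : Fin n, i ≠ j → bs ≤ M i j := by
      intro i j hij
      exact T.min'_le _ (Finset.mem_image.mpr ⟨(i, j),
        Finset.mem_filter.mpr ⟨Finset.mem_product.mpr ⟨Finset.mem_univ i, Finset.mem_univ j⟩, hij⟩, rfl⟩)
    have hbsa : bs < a := by rw [hbs, ← hq₀eq]; exact hlt _ _ hq₀ne
    by_cases hbs1 : 1 ≤ bs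
    · -- apply combA directly to univ
      obtain ⟨i, _, hrec⟩ := hcombA n S (le_of_eq hScard) ⟨q₀.1, hq₀1⟩ bs hbs1
        (fun i _ j _ => by
          rcases eq_or_ne i j with rfl | hij
          · rw [hMdiag]; omega
          · exact hbsle i j hij)
      refine ⟨i, ?_⟩
      -- k ≥ 2
      obtain ⟨j, hjne⟩ : ∃ j : Fin n, j ≠ i := by
        rcases Finset.one_lt_card.mp (by omega : 1 < S.card) with ⟨u, _, w, _, huw⟩
        rcases eq_or_ne u i with rfl | h
        · exact ⟨w, fun hh => huw hh.symm⟩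
        · exact ⟨u, h⟩
      have hpair : ({M i j, a} : Finset ℕ) ⊆ S.image fun j' => M i j' := by
        intro z hz
        rcases Finset.mem_insert.mp hz with rfl | hz
        · exact Finset.mem_image_of_mem _ (Finset.mem_univ j)
        · rw [Finset.mem_singleton.mp hz]
          exact Finset.mem_image.mpr ⟨i, Finset.mem_univ i, hMdiag i⟩
      have hk2 : 2 ≤ (S.image fun j' => M i j').card := by
        have hpc : ({M i j, a} : Finset ℕ).card = 2 := by
          rw [Finset.card_insert_of_notMem, Finset.card_singleton]
          rw [Finset.mem_singleton]
          exact fun h => absurd h (Nat.ne_of_lt (hlt i j (fun hh => hjne hh.symm)))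
        rw [← hpc]
        exact Finset.card_le_card hpair
      calc D ^ 2 * n = D * (D * S.card) := by rw [hScard]; ring
        _ ≤ D * D ^ (S.image fun j' => M i j').card := Nat.mul_le_mul_left _ hrec
        _ = D ^ ((S.image fun j' => M i j').card + 1) := by rw [pow_succ]; ring
        _ ≤ (D + 1) * D ^ (S.image fun j' => M i j').card := by rw [pow_succ]; nlinarith
    · -- bs = 0 : split at the root
      have hbs0 : bs = 0 := by omega
      set g : Fin n → β := fun i => A i 1 with hg
      have hclass : ∀ i j : Fin n, (g i = g j ↔ 1 ≤ M i j) := by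
        intro i j
        exact (hchar i j 1 (by omega)).symm
      have hc : (S.image g).card ≤ D + 1 := hbr0 S
      obtain ⟨v, hv, hvmax⟩ := (S.image g).exists_max_image
        (fun v => (S.filter fun i => g i = v).card) ⟨g q₀.1, Finset.mem_image_of_mem g hq₀1⟩
      set C := S.filter fun i => g i = v with hC
      have hCsub : C ⊆ S := Finset.filter_subset _ _
      have hSC : S.card ≤ (S.image g).card * C.card := by
        have hsum := Finset.sum_le_card_nsmul (S.image g)
            (fun w => (S.filter fun i => g i = w).card) C.card (fun w hw => hvmax w hw)
        rw [smul_eq_mul] at hsum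
        calc S.card = ∑ w ∈ S.image g, (S.filter fun i => g i = w).card :=
              Finset.card_eq_sum_card_fiberwise (fun i hi => Finset.mem_image_of_mem g hi)
          _ ≤ _ := hsum
      have hCne : C.Nonempty := by
        obtain ⟨i', hi', hgi'⟩ := Finset.mem_image.mp hv
        exact ⟨i', Finset.mem_filter.mpr ⟨hi', hgi'⟩⟩
      have hgne : g q₀.1 ≠ g q₀.2 := by
        intro hgeq
        have := (hclass _ _).mp hgeq
        have : bs = M q₀.1 q₀.2 := by rw [hbs, ← hq₀eq]
        omega
      have hCneS : C ≠ S := by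
        intro hCS
        have h1' : q₀.1 ∈ C := hCS ▸ Finset.mem_univ _
        have h2' : q₀.2 ∈ C := hCS ▸ Finset.mem_univ _
        exact hgne ((Finset.mem_filter.mp h1').2.trans (Finset.mem_filter.mp h2').2.symm)
      have hCpairs : ∀ i ∈ C, ∀ j ∈ C, 1 ≤ M i j := by
        intro i hi j hj
        exact (hclass i j).mp
          ((Finset.mem_filter.mp hi).2.trans (Finset.mem_filter.mp hj).2.symm)
      obtain ⟨i, hiC, hrec⟩ := hcombA C.card C le_rfl hCne 1 le_rfl hCpairs
      refine ⟨i, ?_⟩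
      have hjex : ∃ j, j ∉ C := by
        by_contra hno
        push_neg at hno
        exact hCneS (Finset.Subset.antisymm hCsub (fun j _ => hno j))
      obtain ⟨j, hjC⟩ := hjex
      have hMij : M i j = 0 := by
        have hgneij : g i ≠ g j := by
          intro hgeq
          exact hjC (Finset.mem_filter.mpr ⟨Finset.mem_univ j,
            hgeq ▸ (Finset.mem_filter.mp hiC).2⟩)
        have h2' : ¬ (1 ≤ M i j) := fun h => hgneij ((hclass i j).mpr h)
        omega
      have hnotmem : (0:ℕ) ∉ C.image fun j' => M i j' := by
        intro hmem
        obtain ⟨j', hj', hMeq⟩ := Finset.mem_image.mp hmem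
        have := hCpairs i hiC j' hj'
        omega
      have hins : insert 0 (C.image fun j' => M i j') ⊆ S.image fun j' => M i j' := by
        apply Finset.insert_subset
        · exact Finset.mem_image.mpr ⟨j, Finset.mem_univ j, hMij⟩
        · exact Finset.image_subset_image hCsub
      have hk : (C.image fun j' => M i j').card + 1 ≤ (S.image fun j' => M i j').card := by
        rw [← Finset.card_insert_of_notMem hnotmem]
        exact Finset.card_le_card hins
      calc D ^ 2 * n = D * (D * S.card) := by rw [hScard]; ring
        _ ≤ D * ((S.image g).card * (D * C.card)) := by
            have := Nat.mul_le_mul_left (D * 1) hSC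
            nlinarith [hSC]
        _ = (S.image g).card * (D * (D * C.card)) := by ring
        _ ≤ (D + 1) * (D * D ^ (C.image fun j' => M i j').card) :=
            Nat.mul_le_mul hc (Nat.mul_le_mul_left _ hrec)
        _ = (D + 1) * D ^ ((C.image fun j' => M i j').card + 1) := by rw [pow_succ]; ring
        _ ≤ (D + 1) * D ^ (S.image fun j' => M i j').card :=
            Nat.mul_le_mul_left _ (Nat.pow_le_pow_right (by omega) hk)

end B

/-- If a tree rooted at `r` has maximum degree at most `Δ` (with `Δ ≥ 3`) and
`m` distinct leaves at distance `a ≥ 1` from `r`, then some leaf `x i` witnesses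
at least `log_{Δ−1}(m/Δ) + 2` distinct leaf-to-leaf path lengths in `[0, 2a]`. -/
theorem stmt7 {V : Type*} [Fintype V] [DecidableEq V] (G : SimpleGraph V)
    [DecidableRel G.Adj] (hG : G.IsTree) (r : V) (Δ m a : ℕ)
    (hΔ : 3 ≤ Δ) (hmax : G.maxDegree ≤ Δ) (hm : 1 ≤ m) (ha : 1 ≤ a)
    (x : Fin m → V) (hinj : Function.Injective x)
    (hleaf : ∀ i, G.degree (x i) = 1) (hdist : ∀ i, G.dist r (x i) = a) :
    ∃ i : Fin m,
      Real.logb ((Δ : ℝ) - 1) ((m : ℝ) / (Δ : ℝ)) + 2 ≤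
        (({ L : ℕ | L ≤ 2 * a ∧ ∃ (v : V) (p : G.Walk (x i) v),
            p.IsPath ∧ G.degree v = 1 ∧ p.length = L }).ncard : ℝ) := by
  classical
  have hconn := hG.isConnected
  choose p hp using fun i => (hconn r (x i)).exists_walk_length_eq_dist
  have hlen : ∀ i, (p i).length = a := fun i => by rw [hp i, hdist i]
  set A : Fin m → ℕ → V := fun i d => (p i).getVert d with hA
  have hdepth : ∀ i, ∀ d ≤ a, G.dist r (A i d) = d := fun i d hd =>
    StmtAux.geodesic_getVert_dist (p i) (hp i) (by rw [hlen i]; exact hd)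
  have hAa : ∀ i, A i a = x i := fun i =>
    (p i).getVert_of_length_le (le_of_eq (hlen i))
  have hA0 : ∀ i, A i 0 = r := fun i => (p i).getVert_zero
  have hadj : ∀ i, ∀ d < a, G.Adj (A i d) (A i (d+1)) := fun i d hd =>
    (p i).adj_getVert_succ (by rw [hlen i]; exact hd)
  have hdown : ∀ i j, ∀ d, d + 1 ≤ a → A i (d+1) = A j (d+1) → A i d = A j d := by
    intro i j d hd h
    exact StmtAux.unique_parent hG r (hdepth i d (by omega)) (hdepth j d (by omega))
      (hdepth i (d+1) hd) (hadj i d (by omega))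
      (by rw [h]; exact hadj j d (by omega))
  have hMne : ∀ i j : Fin m,
      ((Finset.range (a+1)).filter (fun d => A i d = A j d)).Nonempty := fun i j =>
    ⟨0, Finset.mem_filter.mpr ⟨Finset.mem_range.mpr (by omega), by rw [hA0 i, hA0 j]⟩⟩
  set M : Fin m → Fin m → ℕ := fun i j =>
    ((Finset.range (a+1)).filter (fun d => A i d = A j d)).max' (hMne i j) with hM
  have hM_mem : ∀ i j, M i j ∈ (Finset.range (a+1)).filter (fun d => A i d = A j d) :=
    fun i j => Finset.max'_mem _ _
  have hM_le : ∀ i j, M i j ≤ a := fun i j => by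
    have := (Finset.mem_filter.mp (hM_mem i j)).1
    rw [Finset.mem_range] at this; omega
  have hM_eq : ∀ i j, A i (M i j) = A j (M i j) := fun i j =>
    (Finset.mem_filter.mp (hM_mem i j)).2
  have hM_max : ∀ i j, ∀ d ≤ a, A i d = A j d → d ≤ M i j := fun i j d hd h =>
    Finset.le_max' _ d (Finset.mem_filter.mpr ⟨Finset.mem_range.mpr (by omega), h⟩)
  have hdc : ∀ i j (t : ℕ), ∀ d, d + t ≤ a → A i (d+t) = A j (d+t) → A i d = A j d := by
    intro i j t
    induction t with
    | zero => intro d _ h; simpa using h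
    | succ t ih =>
      intro d hd h
      refine ih d (by omega) (hdown i j (d+t) (by omega) ?_)
      rw [show (d+t)+1 = d+(t+1) by omega]
      exact h
  have hchar : ∀ i j, ∀ d ≤ a, (d ≤ M i j ↔ A i d = A j d) := by
    intro i j d hd
    constructor
    · intro h
      have := hdc i j (M i j - d) d (by have := hM_le i j; omega)
        (by rw [show d + (M i j - d) = M i j by omega]; exact hM_eq i j)
      exact this
    · exact hM_max i j d hd
  have hlt : ∀ i j : Fin m, i ≠ j → M i j < a := by
    intro i j hij
    rcases Nat.lt_or_ge (M i j) a with h | h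
    · exact h
    · exfalso
      have hMa : M i j = a := le_antisymm (hM_le i j) h
      have := hM_eq i j
      rw [hMa, hAa i, hAa j] at this
      exact hij (hinj this)
  -- branching bounds
  have hbr : ∀ (S : Finset (Fin m)) (b : ℕ), 1 ≤ b → b < a →
      (∀ i ∈ S, ∀ j ∈ S, b ≤ M i j) → (S.image fun i => A i (b+1)).card ≤ Δ - 1 := by
    intro S b hb hba hS
    rcases S.eq_empty_or_nonempty with rfl | ⟨i₀, hi₀⟩
    · simp
    · obtain ⟨c, rfl⟩ : ∃ c, b = c + 1 := ⟨b - 1, by omega⟩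
      have hsub : (S.image fun i => A i (c+1+1)) ⊆
          (G.neighborFinset (A i₀ (c+1))).erase (A i₀ c) := by
        intro z hz
        obtain ⟨i, hi, rfl⟩ := Finset.mem_image.mp hz
        have hib : A i (c+1) = A i₀ (c+1) :=
          (hchar i i₀ (c+1) (by omega)).mp (hS i hi i₀ hi₀)
        refine Finset.mem_erase.mpr ⟨?_, ?_⟩
        · intro hcontra
          have h1 := hdepth i (c+1+1) (by omega)
          have h2 := hdepth i₀ c (by omega)
          rw [hcontra, h2] at h1
          omega
        · rw [SimpleGraph.mem_neighborFinset, ← hib]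
          exact hadj i (c+1) hba
      have hwmem : A i₀ c ∈ G.neighborFinset (A i₀ (c+1)) := by
        rw [SimpleGraph.mem_neighborFinset]
        exact (hadj i₀ c (by omega)).symm
      calc (S.image fun i => A i (c+1+1)).card
          ≤ ((G.neighborFinset (A i₀ (c+1))).erase (A i₀ c)).card :=
            Finset.card_le_card hsub
        _ = (G.neighborFinset (A i₀ (c+1))).card - 1 := Finset.card_erase_of_mem hwmem
        _ = G.degree (A i₀ (c+1)) - 1 := by rw [G.card_neighborFinset_eq_degree]
        _ ≤ Δ - 1 := by
            have := G.degree_le_maxDegree (A i₀ (c+1))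
            omega
  have hbr0 : ∀ S : Finset (Fin m), (S.image fun i => A i 1).card ≤ (Δ - 1) + 1 := by
    intro S
    have hsub : (S.image fun i => A i 1) ⊆ G.neighborFinset r := by
      intro z hz
      obtain ⟨i, hi, rfl⟩ := Finset.mem_image.mp hz
      rw [SimpleGraph.mem_neighborFinset, ← hA0 i]
      exact hadj i 0 (by omega)
    calc (S.image fun i => A i 1).card ≤ (G.neighborFinset r).card :=
          Finset.card_le_card hsub
      _ = G.degree r := G.card_neighborFinset_eq_degree r
      _ ≤ (Δ - 1) + 1 := by
          have := G.degree_le_maxDegree r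
          omega
  obtain ⟨i, hnum⟩ := B.combB (Δ - 1) a (by omega) ha (by omega) A M hM_le hchar hlt hbr hbr0
  rw [show (Δ - 1) + 1 = Δ by omega] at hnum
  refine ⟨i, ?_⟩
  -- build, for each j, a path from x i to x j of length 2*(a - M i j)
  have hkey : ∀ j : Fin m, ∃ (v : V) (w : G.Walk (x i) v),
      w.IsPath ∧ G.degree v = 1 ∧ w.length = 2 * (a - M i j) := by
    intro j
    set d := M i j with hd
    have hdle : d ≤ a := hM_le i j
    have heq : (p j).getVert d = (p i).getVert d := (hM_eq i j).symm
    set q1 : G.Walk (x i) (A i d) := ((p i).drop d).reverse with hq1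
    set q2 : G.Walk (A i d) (x j) := ((p j).drop d).copy heq rfl with hq2
    set w : G.Walk (x i) (x j) := q1.append q2 with hw
    have hq1len : q1.length = a - d := by
      rw [hq1, SimpleGraph.Walk.length_reverse, StmtAux.length_drop', hlen]
    have hq2len : q2.length = a - d := by
      rw [hq2, SimpleGraph.Walk.length_copy, StmtAux.length_drop', hlen]
    have hwlen : w.length = 2 * (a - d) := by
      rw [hw, SimpleGraph.Walk.length_append, hq1len, hq2len]; omega
    have hw1 : ∀ t ≤ a - d, w.getVert t = A i (a - t) := by
      intro t ht
      rw [hw, SimpleGraph.Walk.getVert_append, hq1len]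
      by_cases hlt' : t < a - d
      · rw [if_pos hlt', hq1, SimpleGraph.Walk.getVert_reverse,
          StmtAux.length_drop', hlen, StmtAux.getVert_drop']
        show (p i).getVert (d + (a - d - t)) = A i (a - t)
        show A i (d + (a - d - t)) = A i (a - t)
        congr 1
        omega
      · rw [if_neg hlt', hq2, SimpleGraph.Walk.getVert_copy, StmtAux.getVert_drop']
        show A j (d + (t - (a - d))) = A i (a - t)
        rw [show d + (t - (a - d)) = d by omega, show a - t = d by omega]
        exact (hM_eq i j).symm
    have hw2 : ∀ t, a - d ≤ t → w.getVert t = A j (d + (t - (a - d))) := by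
      intro t ht
      rw [hw, SimpleGraph.Walk.getVert_append, hq1len, if_neg (by omega),
        hq2, SimpleGraph.Walk.getVert_copy, StmtAux.getVert_drop']
    have haux : ∀ t1 t2, t1 ≤ w.length → t2 ≤ w.length → t1 < t2 →
        w.getVert t1 ≠ w.getVert t2 := by
      intro t1 t2 ht1 ht2 hlt12 heq'
      rw [hwlen] at ht1 ht2
      by_cases c1 : t1 ≤ a - d <;> by_cases c2 : t2 ≤ a - d
      · rw [hw1 t1 c1, hw1 t2 c2] at heq'
        have h1 := hdepth i (a - t1) (by omega)
        have h2 := hdepth i (a - t2) (by omega)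
        rw [heq'] at h1
        omega
      · rw [hw1 t1 c1, hw2 t2 (by omega)] at heq'
        have hed : d + 1 ≤ d + (t2 - (a - d)) := by omega
        have hea : d + (t2 - (a - d)) ≤ a := by omega
        have h1 := hdepth i (a - t1) (by omega)
        have h2 := hdepth j (d + (t2 - (a - d))) hea
        rw [heq'] at h1
        have hee : a - t1 = d + (t2 - (a - d)) := by omega
        rw [hee] at heq'
        have := hM_max i j (d + (t2 - (a - d))) hea heq'
        omega
      · omega
      · rw [hw2 t1 (by omega), hw2 t2 (by omega)] at heq'
        have h1 := hdepth j (d + (t1 - (a - d))) (by omega)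
        have h2 := hdepth j (d + (t2 - (a - d))) (by omega)
        rw [heq'] at h1
        omega
    have hpath : w.IsPath := by
      apply StmtAux.isPath_of_getVert_injOn w
      intro t1 ht1' t2 ht2' heq'
      rcases lt_trichotomy t1 t2 with h | h | h
      · exact absurd heq' (haux t1 t2 ht1' ht2' h)
      · exact h
      · exact absurd heq'.symm (haux t2 t1 ht2' ht1' h)
    exact ⟨x j, w, hpath, hleaf j, by rw [hwlen]⟩
  -- the finite set of achieved lengths
  set Tset : Set ℕ := { L : ℕ | L ≤ 2 * a ∧ ∃ (v : V) (q : G.Walk (x i) v),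
      q.IsPath ∧ G.degree v = 1 ∧ q.length = L } with hTset
  have hTfin : Tset.Finite := (Set.finite_Iic (2*a)).subset (fun L hL => hL.1)
  set F : Finset ℕ := (Finset.univ.image fun j => M i j).image (fun e => 2 * (a - e)) with hF
  have hFsub : ↑F ⊆ Tset := by
    intro L hL
    rw [hF] at hL
    simp only [Finset.coe_image, Set.mem_image, Finset.mem_coe, Finset.mem_image] at hL
    obtain ⟨e, ⟨j, _, hMj⟩, rfl⟩ := hL
    refine ⟨by omega, ?_⟩
    obtain ⟨v, w, hw1', hw2', hw3'⟩ := hkey j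
    exact ⟨v, w, hw1', hw2', by rw [hw3', hMj]⟩
  have hFcard : F.card = (Finset.univ.image fun j => M i j).card := by
    apply Finset.card_image_of_injOn
    intro e1 h1 e2 h2 hee
    obtain ⟨j1, _, hj1⟩ := Finset.mem_image.mp (by exact_mod_cast h1)
    obtain ⟨j2, _, hj2⟩ := Finset.mem_image.mp (by exact_mod_cast h2)
    have he1 : e1 ≤ a := by rw [← hj1]; exact hM_le i j1
    have he2 : e2 ≤ a := by rw [← hj2]; exact hM_le i j2
    have hee' : 2 * (a - e1) = 2 * (a - e2) := hee
    omega
  set k := (Finset.univ.image fun j => M i j).card with hk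
  have hkcard : k ≤ Tset.ncard := by
    calc k = F.card := hFcard.symm
      _ = (↑F : Set ℕ).ncard := (Set.ncard_coe_finset F).symm
      _ ≤ Tset.ncard := Set.ncard_le_ncard hFsub hTfin
  -- final real arithmetic
  have hB1 : (1:ℝ) < (Δ:ℝ) - 1 := by
    have : (3:ℝ) ≤ (Δ:ℝ) := by exact_mod_cast hΔ
    linarith
  have hmpos : (0:ℝ) < (m:ℝ) := by exact_mod_cast hm
  have hΔpos : (0:ℝ) < (Δ:ℝ) := by positivity
  have hcast : ((Δ:ℝ)-1)^2 * m ≤ (Δ:ℝ) * ((Δ:ℝ)-1)^k := by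
    have h' : (((Δ-1)^2 * m : ℕ) : ℝ) ≤ ((Δ * (Δ-1)^k : ℕ) : ℝ) := Nat.cast_le.mpr hnum
    push_cast [Nat.cast_sub (by omega : 1 ≤ Δ)] at h'
    exact h'
  have hlogb : Real.logb ((Δ:ℝ)-1) ((m:ℝ) / (Δ:ℝ)) ≤ (k:ℝ) - 2 := by
    rw [Real.logb_le_iff_le_rpow hB1 (by positivity)]
    have hrw : ((Δ:ℝ)-1) ^ ((k:ℝ) - 2) = ((Δ:ℝ)-1)^(k:ℕ) / ((Δ:ℝ)-1)^(2:ℕ) := by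
      rw [Real.rpow_sub (by linarith), Real.rpow_natCast,
        show ((2:ℝ)) = ((2:ℕ):ℝ) by norm_num, Real.rpow_natCast]
    rw [hrw, div_le_div_iff₀ (by positivity) (by positivity)]
    nlinarith [hcast]
  have hkk : (k:ℝ) ≤ (Tset.ncard : ℝ) := by exact_mod_cast hkcard
  calc Real.logb ((Δ:ℝ)-1) ((m:ℝ) / (Δ:ℝ)) + 2 ≤ (k:ℝ) := by linarith
    _ ≤ (Tset.ncard : ℝ) := hkk
end

section
/- Let k ≥ 3 and let G be an n-vertex degree k-critical graph with n ≥ k+1. Then there exists an ordering x_1, x_2, ..., x_n of V(G) such that, writing d⁺(x_i) for the number of neighbours x_j of x_i with j > i, one has d⁺(x_1) = k, d⁺(x_i) = k−1 for 2 ≤ i ≤ n−k+1, and d⁺(x_i) = n−i for n−k+2 ≤ i ≤ n. -/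
/-- Every degree `k`-critical graph on `n ≥ k+1` vertices (`k ≥ 3`) admits an
ordering `x_1, …, x_n` of its vertices with `d⁺(x_1) = k`, `d⁺(x_i) = k−1` for
`2 ≤ i ≤ n−k+1`, and `d⁺(x_i) = n−i` for `n−k+2 ≤ i ≤ n` (here stated with
0-based indices `i : Fin n`). -/
theorem stmt12 {V : Type*} [Fintype V] [DecidableEq V] (G : SimpleGraph V)
    [DecidableRel G.Adj] (k : ℕ) (hk : 3 ≤ k) (hn : k + 1 ≤ Fintype.card V)
    (hedges : G.edgeFinset.card + k.choose 2 = (k - 1) * Fintype.card V + 1)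
    (hcrit : ∀ S : Finset V, S.Nonempty → S ≠ Finset.univ →
      ∃ v ∈ S, (S.filter fun u => G.Adj v u).card < k) :
    ∃ f : Fin (Fintype.card V) ≃ V,
      ∀ i : Fin (Fintype.card V),
        (Finset.univ.filter fun j => i < j ∧ G.Adj (f i) (f j)).card =
          if (i : ℕ) = 0 then k
          else if (i : ℕ) ≤ Fintype.card V - k then k - 1
          else Fintype.card V - 1 - (i : ℕ) := by
  classical
  set n := Fintype.card V with hn_def
  have hV : Nonempty V := Fintype.card_pos_iff.mp (by omega)
  obtain ⟨w⟩ := hV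
  -- a vertex of degree ≤ k
  have herase_ne : Finset.univ.erase w ≠ Finset.univ := by
    intro h
    have hw := Finset.mem_univ w
    rw [← h] at hw
    exact Finset.notMem_erase w _ hw
  have herase_nonempty : (Finset.univ.erase w).Nonempty := by
    rw [← Finset.card_pos, Finset.card_erase_of_mem (Finset.mem_univ w), Finset.card_univ]
    omega
  obtain ⟨v₀, hv₀S, hv₀deg⟩ := hcrit _ herase_nonempty herase_ne
  have hv₀ : (Finset.univ.filter fun u => G.Adj v₀ u).card ≤ k := by
    have hsub : (Finset.univ.filter fun u => G.Adj v₀ u) ⊆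
        insert w ((Finset.univ.erase w).filter fun u => G.Adj v₀ u) := by
      intro u hu
      simp only [Finset.mem_filter, Finset.mem_univ, true_and] at hu
      by_cases h : u = w
      · simp [h]
      · simp [Finset.mem_insert, Finset.mem_erase, h, hu]
    have h1 := Finset.card_le_card hsub
    have h2 := Finset.card_insert_le w ((Finset.univ.erase w).filter fun u => G.Adj v₀ u)
    omega
  -- total choice function
  have total : ∀ S : Finset V, ∃ v,
      S.Nonempty → S ≠ Finset.univ → v ∈ S ∧ (S.filter fun u => G.Adj v u).card < k := by
    intro S
    by_cases h1 : S.Nonempty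
    · by_cases h2 : S ≠ Finset.univ
      · obtain ⟨v, hv⟩ := hcrit S h1 h2
        exact ⟨v, fun _ _ => hv⟩
      · exact ⟨w, fun _ h => absurd h h2⟩
    · exact ⟨w, fun h _ => absurd h h1⟩
  choose pick hpick using total
  -- the peeling sequence
  set T : ℕ → Finset V × V :=
    fun m => Nat.rec ((Finset.univ : Finset V), v₀)
      (fun _ p => (p.1.erase p.2, pick (p.1.erase p.2))) m with hT
  have hTs : ∀ m, T (m+1) = ((T m).1.erase (T m).2, pick ((T m).1.erase (T m).2)) :=
    fun m => rfl
  -- key invariants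
  have hkey : ∀ m, (m ≤ n → (T m).1.card = n - m) ∧
      (m < n → (T m).2 ∈ (T m).1 ∧
        (0 < m → ((T m).1.filter fun u => G.Adj (T m).2 u).card < k)) := by
    intro m
    induction m with
    | zero =>
      refine ⟨fun _ => by simp [hT, hn_def], fun _ => ⟨by simp [hT], fun h => absurd h (by omega)⟩⟩
    | succ m ih =>
      have hc' : m + 1 ≤ n → (T (m+1)).1.card = n - (m+1) := by
        intro hmn
        have hc : (T m).1.card = n - m := ih.1 (by omega)
        have hm : (T m).2 ∈ (T m).1 := (ih.2 (by omega)).1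
        rw [hTs m]
        simp only [Finset.card_erase_of_mem hm, hc]
        omega
      refine ⟨hc', ?_⟩
      intro hmn
      have hcc := hc' (by omega)
      have hne : ((T (m+1)).1).Nonempty := by
        rw [← Finset.card_pos, hcc]; omega
      have hneu : (T (m+1)).1 ≠ Finset.univ := by
        intro h; rw [h, Finset.card_univ] at hcc; omega
      have hp := hpick _ hne hneu
      have h2 : (T (m+1)).2 = pick ((T (m+1)).1) := rfl
      exact ⟨by rw [h2]; exact hp.1, fun _ => by rw [h2]; exact hp.2⟩
  -- monotonicity
  have hsub0 : ∀ m t, (T (m + t)).1 ⊆ (T m).1 := by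
    intro m t
    induction t with
    | zero => exact Finset.Subset.refl _
    | succ t ih =>
      have : (T (m + t + 1)).1 ⊆ (T (m + t)).1 := by
        rw [hTs]; exact Finset.erase_subset _ _
      exact this.trans ih
  have hsub' : ∀ m m', m ≤ m' → (T m').1 ⊆ (T m).1 := by
    intro m m' h
    obtain ⟨t, rfl⟩ := Nat.exists_eq_add_of_le h
    exact hsub0 m t
  -- membership of later picks
  have hxmem : ∀ i j : ℕ, i < j → j < n → (T j).2 ∈ (T (i+1)).1 :=
    fun i j hij hj => hsub' (i+1) j hij ((hkey j).2 hj).1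
  -- injectivity
  have hinj : Function.Injective (fun i : Fin n => (T (i : ℕ)).2) := by
    have haux : ∀ i j : Fin n, (i : ℕ) < (j : ℕ) → (T (i : ℕ)).2 ≠ (T (j : ℕ)).2 := by
      intro i j h heq
      have hm := hxmem i j h j.isLt
      rw [hTs] at hm
      rw [← heq] at hm
      exact Finset.notMem_erase _ _ hm
    intro i j hij
    by_contra hne
    rcases lt_or_gt_of_ne (fun h : (i : ℕ) = (j : ℕ) => hne (Fin.ext h)) with h | h
    · exact haux i j h hij
    · exact haux j i h hij.symm
  have hbij : Function.Bijective (fun i : Fin n => (T (i : ℕ)).2) := by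
    rw [Fintype.bijective_iff_injective_and_card]
    exact ⟨hinj, by simp [hn_def]⟩
  refine ⟨Equiv.ofBijective _ hbij, ?_⟩
  -- d⁺ counts
  set d : ℕ → ℕ := fun m => ((T (m+1)).1.filter fun u => G.Adj (T m).2 u).card with hd_def
  have hti : ∀ i : Fin n,
      (Finset.univ.filter fun j => i < j ∧ G.Adj (T (i : ℕ)).2 (T (j : ℕ)).2).card = d i := by
    intro i
    refine Eq.trans (Finset.card_bij (fun j _ => (T (j : ℕ)).2) ?_ ?_ ?_)
      (rfl : (((T ((i : ℕ)+1)).1.filter fun u => G.Adj (T (i : ℕ)).2 u).card = d (i : ℕ)))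
    · intro j hj
      simp only [Finset.mem_filter, Finset.mem_univ, true_and] at hj
      simp only [Finset.mem_filter]
      exact ⟨hxmem i j (Fin.lt_def.mp hj.1) j.isLt, hj.2⟩
    · intro j1 h1 j2 h2 he
      exact hinj he
    · intro u hu
      simp only [Finset.mem_filter] at hu
      obtain ⟨j, hj⟩ := hbij.2 u
      refine ⟨j, ?_, hj⟩
      simp only [Finset.mem_filter, Finset.mem_univ, true_and]
      constructor
      · rw [Fin.lt_def]
        by_contra hle
        push_neg at hle
        have hmem : u ∈ (T ((j : ℕ)+1)).1 := hsub' ((j : ℕ)+1) ((i : ℕ)+1) (by omega) hu.1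
        rw [hTs] at hmem
        rw [← hj] at hmem
        exact Finset.notMem_erase _ _ hmem
      · rw [show (T (j : ℕ)).2 = u from hj]
        exact hu.2
  -- bounds
  have hdb : ∀ m, m < n → d m ≤ (if m = 0 then k else min (k-1) (n-1-m)) := by
    intro m hm
    by_cases h0 : m = 0
    · subst h0
      have h1 : d 0 ≤ (Finset.univ.filter fun u => G.Adj v₀ u).card := by
        have hrfl : d 0 = ((T 1).1.filter fun u => G.Adj v₀ u).card := rfl
        rw [hrfl]
        exact Finset.card_le_card (Finset.filter_subset_filter _ (Finset.subset_univ _))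
      simpa using le_trans h1 hv₀
    · have hsubm : (T (m+1)).1 ⊆ (T m).1 := by
        rw [hTs]; exact Finset.erase_subset _ _
      have h1 : d m ≤ ((T m).1.filter fun u => G.Adj (T m).2 u).card := by
        have hrfl : d m = (((T (m+1)).1.filter fun u => G.Adj (T m).2 u)).card := rfl
        rw [hrfl]
        exact Finset.card_le_card (Finset.filter_subset_filter _ hsubm)
      have h2 := ((hkey m).2 hm).2 (by omega)
      have h3 : d m ≤ (T (m+1)).1.card := Finset.card_filter_le _ _
      have h4 : (T (m+1)).1.card = n - (m+1) := (hkey (m+1)).1 (by omega)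
      rw [if_neg h0]
      omega
  -- edge counting
  set em : ℕ → Finset (Sym2 V) :=
    fun m => G.edgeFinset.filter (fun e => ∀ u ∈ e, u ∈ (T m).1) with hem
  have hstep : ∀ m, m < n → (em m).card = d m + (em (m+1)).card := by
    intro m hm
    have hxm := ((hkey m).2 hm).1
    have hcard1 : (((T m).1.erase (T m).2).filter fun u => G.Adj (T m).2 u).card
        = ((em m).filter fun e => (T m).2 ∈ e).card := by
      refine Finset.card_bij (fun u _ => s((T m).2, u)) ?_ ?_ ?_
      · intro u hu
        rw [Finset.mem_filter, Finset.mem_erase] at hu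
        simp only [hem, Finset.mem_filter, SimpleGraph.mem_edgeFinset,
          SimpleGraph.mem_edgeSet]
        refine ⟨⟨hu.2, ?_⟩, Sym2.mem_mk_left _ _⟩
        intro v hv
        rw [Sym2.mem_iff] at hv
        rcases hv with rfl | rfl
        · exact hxm
        · exact hu.1.2
      · intro u1 h1 u2 h2 he
        exact Sym2.congr_right.mp he
      · intro e he
        simp only [hem, Finset.mem_filter, SimpleGraph.mem_edgeFinset] at he
        obtain ⟨⟨hee, hall⟩, hxe⟩ := he
        refine ⟨Sym2.Mem.other hxe, ?_, Sym2.other_spec hxe⟩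
        have hadj : G.Adj (T m).2 (Sym2.Mem.other hxe) := by
          rw [← SimpleGraph.mem_edgeSet, Sym2.other_spec hxe]
          exact hee
        rw [Finset.mem_filter, Finset.mem_erase]
        exact ⟨⟨(G.ne_of_adj hadj).symm, hall _ (Sym2.other_mem hxe)⟩, hadj⟩
    rw [← Finset.card_filter_add_card_filter_not (s := em m)
      (p := fun e => (T m).2 ∈ e)]
    congr 1
    · exact hcard1.symm
    · congr 1
      ext e
      simp only [hem, Finset.mem_filter]
      constructor
      · rintro ⟨⟨hee, hall⟩, hx⟩
        refine ⟨hee, fun u hu => ?_⟩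
        show u ∈ (T m).1.erase (T m).2
        rw [Finset.mem_erase]
        exact ⟨fun h => hx (h ▸ hu), hall u hu⟩
      · rintro ⟨hee, hall⟩
        have hall' : ∀ u ∈ e, u ∈ (T m).1.erase (T m).2 := hall
        refine ⟨⟨hee, fun u hu => Finset.mem_of_mem_erase (hall' u hu)⟩, fun hx => ?_⟩
        exact (Finset.mem_erase.mp (hall' _ hx)).1 rfl
  -- telescoping
  have htel : ∀ t, t ≤ n → (em (n - t)).card = ∑ m ∈ Finset.Ico (n-t) n, d m := by
    intro t
    induction t with
    | zero =>
      intro _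
      simp only [Nat.sub_zero, Finset.Ico_self, Finset.sum_empty]
      have hSn : (T n).1 = ∅ := by
        apply Finset.card_eq_zero.mp
        rw [(hkey n).1 le_rfl]
        omega
      have : em n = ∅ := by
        rw [Finset.eq_empty_iff_forall_notMem]
        intro e he
        simp only [hem, Finset.mem_filter] at he
        have hmem := he.2 (Quot.out e).1 (Sym2.out_fst_mem e)
        rw [hSn] at hmem
        exact Finset.notMem_empty _ hmem
      rw [this, Finset.card_empty]
    | succ t ih =>
      intro ht
      have hm : n - (t+1) < n := by omega
      have heq : n - t = n - (t+1) + 1 := by omega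
      have ih' := ih (by omega)
      rw [heq] at ih'
      rw [hstep _ hm, ih', Finset.sum_eq_sum_Ico_succ_bot hm]
  have hsum : ∑ m ∈ Finset.range n, d m = G.edgeFinset.card := by
    have h0 := htel n le_rfl
    rw [Nat.sub_self] at h0
    have he0 : em 0 = G.edgeFinset := by
      apply Finset.filter_true_of_mem
      intro e _ u _
      have : (T 0).1 = (Finset.univ : Finset V) := rfl
      rw [this]
      exact Finset.mem_univ u
    rw [he0] at h0
    rw [Finset.range_eq_Ico, ← h0]
  -- arithmetic
  have hmin : ∀ N, k + 1 ≤ N →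
      (∑ j ∈ Finset.range (N-1), min (k-1) j) + k + k.choose 2 = (k-1) * N + 1 := by
    intro N hN
    induction N, hN using Nat.le_induction with
    | base =>
      have h1 : ∑ j ∈ Finset.range (k+1-1), min (k-1) j = ∑ j ∈ Finset.range k, j := by
        rw [show k + 1 - 1 = k from rfl]
        refine Finset.sum_congr rfl fun j hj => ?_
        rw [Finset.mem_range] at hj
        omega
      have h2 : (∑ j ∈ Finset.range k, j) * 2 = k * (k-1) := Finset.sum_range_id_mul_two k
      have hev : 2 ∣ k * (k - 1) := by
        have : Even ((k-1) * ((k-1)+1)) := Nat.even_mul_succ_self (k-1)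
        rw [show (k-1)+1 = k by omega] at this
        rw [mul_comm]
        exact this.two_dvd
      have h3 : k.choose 2 * 2 = k * (k-1) := by
        rw [Nat.choose_two_right]
        exact Nat.div_mul_cancel hev
      have h4 : (k-1) * (k+1) + 1 = k * (k-1) + k := by
        obtain ⟨s, rfl⟩ : ∃ s, k = s + 3 := ⟨k - 3, by omega⟩
        show (s+2) * (s+3+1) + 1 = (s+3) * (s+2) + (s+3)
        ring
      rw [h1]
      omega
    | succ N hN ih =>
      have h1 : N - 1 + 1 = N := by omega
      rw [show N + 1 - 1 = N from rfl, ← h1, Finset.sum_range_succ, h1]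
      rw [show min (k-1) (N-1) = k - 1 by omega]
      rw [Nat.mul_succ]
      omega
  have hreindex : ∑ m ∈ Finset.Ico 1 n, min (k-1) (n-1-m)
      = ∑ j ∈ Finset.range (n-1), min (k-1) j := by
    rw [Finset.range_eq_Ico]
    refine Finset.sum_nbij' (fun m => n-1-m) (fun j => n-1-j) ?_ ?_ ?_ ?_ ?_
    · intro a ha
      rw [Finset.mem_Ico] at ha
      show n-1-a ∈ Finset.Ico 0 (n-1)
      rw [Finset.mem_Ico]; omega
    · intro a ha
      rw [Finset.mem_Ico] at ha
      show n-1-a ∈ Finset.Ico 1 n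
      rw [Finset.mem_Ico]; omega
    · intro a ha
      rw [Finset.mem_Ico] at ha
      show n-1-(n-1-a) = a
      omega
    · intro a ha
      rw [Finset.mem_Ico] at ha
      show n-1-(n-1-a) = a
      omega
    · intro a _; rfl
  have hsplit : ∑ m ∈ Finset.range n, (if m = 0 then k else min (k-1) (n-1-m))
      = k + ∑ m ∈ Finset.Ico 1 n, min (k-1) (n-1-m) := by
    rw [Finset.range_eq_Ico, Finset.sum_eq_sum_Ico_succ_bot (by omega : 0 < n)]
    simp only [if_pos rfl]
    congr 1
    refine Finset.sum_congr rfl fun m hm => ?_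
    rw [Finset.mem_Ico] at hm
    rw [if_neg (by omega)]
  have harith : ∑ m ∈ Finset.range n, (if m = 0 then k else min (k-1) (n-1-m)) + k.choose 2
      = (k-1) * n + 1 := by
    rw [hsplit, hreindex]
    have := hmin n hn
    omega
  -- forced equalities
  have hsum_b : ∑ m ∈ Finset.range n, d m
      = ∑ m ∈ Finset.range n, (if m = 0 then k else min (k-1) (n-1-m)) := by
    rw [hsum]
    have h2 : G.edgeFinset.card + k.choose 2
        = (∑ m ∈ Finset.range n, (if m = 0 then k else min (k-1) (n-1-m))) + k.choose 2 := by
      rw [hedges, harith]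
    exact Nat.add_right_cancel h2
  have hall : ∀ m ∈ Finset.range n, d m = (if m = 0 then k else min (k-1) (n-1-m)) :=
    (Finset.sum_eq_sum_iff_of_le (fun m hm => hdb m (Finset.mem_range.mp hm))).mp hsum_b
  -- conclusion
  intro i
  simp only [Equiv.ofBijective_apply]
  rw [hti i, hall (i : ℕ) (Finset.mem_range.mpr i.isLt)]
  have hi := i.isLt
  by_cases h0 : (i : ℕ) = 0
  · simp [h0]
  · rw [if_neg h0, if_neg h0]
    by_cases h1 : (i : ℕ) ≤ n - k
    · rw [if_pos h1]; omega
    · rw [if_neg h1]; omega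
end

section
/- For every k ≥ 1, there exist finite sets U, V of integers with U − V = {1, 2, ..., 13^k} and |U + V| = 10^k. -/
open Pointwise

lemma aux_add_sub_add (A B C D : Finset ℤ) :
    (A + B) - (C + D) = (A - C) + (B - D) := by
  ext x
  simp only [Finset.mem_sub, Finset.mem_add]
  constructor
  · rintro ⟨u, ⟨a, ha, b, hb, rfl⟩, v, ⟨c, hc, d, hd, rfl⟩, rfl⟩
    exact ⟨a - c, ⟨a, ha, c, hc, rfl⟩, b - d, ⟨b, hb, d, hd, rfl⟩, by ring⟩
  · rintro ⟨u, ⟨a, ha, c, hc, rfl⟩, v, ⟨b, hb, d, hd, rfl⟩, rfl⟩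
    exact ⟨a + b, ⟨a, ha, b, hb, rfl⟩, c + d, ⟨c, hc, d, hd, rfl⟩, by ring⟩

lemma aux_image_sub (m : ℤ) (X Y : Finset ℤ) :
    (X.image (m * ·)) - (Y.image (m * ·)) = (X - Y).image (m * ·) := by
  ext x
  simp only [Finset.mem_sub, Finset.mem_image]
  constructor
  · rintro ⟨_, ⟨a, ha, rfl⟩, _, ⟨b, hb, rfl⟩, rfl⟩
    exact ⟨a - b, ⟨a, ha, b, hb, rfl⟩, by ring⟩
  · rintro ⟨_, ⟨a, ha, b, hb, rfl⟩, rfl⟩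
    exact ⟨m * a, ⟨a, ha, rfl⟩, m * b, ⟨b, hb, rfl⟩, by ring⟩

lemma aux_image_add (m : ℤ) (X Y : Finset ℤ) :
    (X.image (m * ·)) + (Y.image (m * ·)) = (X + Y).image (m * ·) := by
  ext x
  simp only [Finset.mem_add, Finset.mem_image]
  constructor
  · rintro ⟨_, ⟨a, ha, rfl⟩, _, ⟨b, hb, rfl⟩, rfl⟩
    exact ⟨a + b, ⟨a, ha, b, hb, rfl⟩, by ring⟩
  · rintro ⟨_, ⟨a, ha, b, hb, rfl⟩, rfl⟩
    exact ⟨m * a, ⟨a, ha, rfl⟩, m * b, ⟨b, hb, rfl⟩, by ring⟩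

lemma aux_icc_decomp (m : ℤ) (hm : 1 ≤ m) :
    Finset.Icc (0:ℤ) (m - 1) + (Finset.Icc (0:ℤ) 12).image (m * ·)
      = Finset.Icc 0 (13 * m - 1) := by
  ext x
  simp only [Finset.mem_add, Finset.mem_image, Finset.mem_Icc]
  constructor
  · rintro ⟨r, hr, _, ⟨d, hd, rfl⟩, rfl⟩
    constructor <;> nlinarith [hr.1, hr.2, hd.1, hd.2]
  · rintro ⟨h0, h1⟩
    have hdm : m * (x / m) + x % m = x := Int.mul_ediv_add_emod x m
    have hr0 : 0 ≤ x % m := Int.emod_nonneg x (by omega)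
    have hr1 : x % m < m := Int.emod_lt_of_pos x (by omega)
    have hd0 : 0 ≤ x / m := Int.ediv_nonneg h0 (by omega)
    have hd1 : x / m ≤ 12 := by
      by_contra hd
      push_neg at hd
      have h13 : (13:ℤ) ≤ x / m := by omega
      have : m * 13 ≤ m * (x / m) := mul_le_mul_of_nonneg_left h13 (by omega)
      linarith
    exact ⟨x % m, ⟨hr0, by omega⟩, m * (x / m), ⟨x / m, ⟨hd0, hd1⟩, rfl⟩, by linarith⟩

lemma aux_card_add_image (A B : Finset ℤ) (m l : ℤ) (hm : 1 ≤ m)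
    (hA : A ⊆ Finset.Icc l (l + m - 1)) :
    (A + B.image (m * ·)).card = A.card * B.card := by
  have himg : A + B.image (m * ·) = (A ×ˢ B).image (fun p => p.1 + m * p.2) := by
    ext x
    simp only [Finset.mem_add, Finset.mem_image, Finset.mem_product]
    constructor
    · rintro ⟨a, ha, _, ⟨b, hb, rfl⟩, rfl⟩
      exact ⟨(a, b), ⟨ha, hb⟩, rfl⟩
    · rintro ⟨⟨a, b⟩, ⟨ha, hb⟩, rfl⟩
      exact ⟨a, ha, m * b, ⟨b, hb, rfl⟩, rfl⟩
  rw [himg, Finset.card_image_of_injOn, Finset.card_product]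
  rintro ⟨a, b⟩ hab ⟨a', b'⟩ hab' heq
  simp only [Finset.mem_coe, Finset.mem_product] at hab hab'
  have ha := Finset.mem_Icc.mp (hA hab.1)
  have ha' := Finset.mem_Icc.mp (hA hab'.1)
  simp only at heq
  have hb : b = b' := by
    by_contra h
    have h1 : b - b' ≥ 1 ∨ b' - b ≥ 1 := by omega
    rcases h1 with h1 | h1
    · nlinarith
    · nlinarith
  subst hb
  have : a = a' := by linarith
  subst this
  rfl

lemma aux_key (k : ℕ) : ∃ U V : Finset ℤ, ∃ l : ℤ,
    U - V = Finset.Icc 0 (13 ^ k - 1) ∧ (U + V).card = 10 ^ k ∧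
    U + V ⊆ Finset.Icc l (l + 13 ^ k - 1) := by
  induction k with
  | zero => exact ⟨{0}, {0}, 0, by decide, by decide, by decide⟩
  | succ k ih =>
    obtain ⟨U, V, l, h1, h2, h3⟩ := ih
    have hm : (1:ℤ) ≤ 13 ^ k := by exact_mod_cast Nat.one_le_pow k 13 (by norm_num)
    set m : ℤ := 13 ^ k with hmdef
    refine ⟨U + (({1, 2, 5, 7} : Finset ℤ).image (m * ·)),
            V + (({-5, -4, -1, 1} : Finset ℤ).image (m * ·)),
            l - 4 * m, ?_, ?_, ?_⟩
    · rw [aux_add_sub_add, aux_image_sub, h1]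
      have hXY : ({1, 2, 5, 7} : Finset ℤ) - ({-5, -4, -1, 1} : Finset ℤ)
          = Finset.Icc 0 12 := by decide
      rw [hXY, aux_icc_decomp m hm]
      congr 1
      rw [pow_succ]; ring
    · rw [add_add_add_comm, aux_image_add]
      rw [aux_card_add_image (U + V) _ m l hm h3, h2]
      have : (({1, 2, 5, 7} : Finset ℤ) + ({-5, -4, -1, 1} : Finset ℤ)).card = 10 := by
        decide
      rw [this, pow_succ]
    · rw [add_add_add_comm, aux_image_add]
      intro x hx
      rw [Finset.mem_add] at hx
      obtain ⟨s, hs, e, he, rfl⟩ := hx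
      rw [Finset.mem_image] at he
      obtain ⟨b, hb, rfl⟩ := he
      have hs' := Finset.mem_Icc.mp (h3 hs)
      have hbb : -4 ≤ b ∧ b ≤ 8 := by
        have : ∀ y ∈ ({1, 2, 5, 7} : Finset ℤ) + ({-5, -4, -1, 1} : Finset ℤ),
            -4 ≤ y ∧ y ≤ 8 := by decide
        exact this b hb
      rw [Finset.mem_Icc]
      have hp : (13:ℤ) ^ (k + 1) = 13 * m := by rw [pow_succ]; ring
      constructor <;> nlinarith [hbb.1, hbb.2, hs'.1, hs'.2]

/-- For every `k ≥ 1` there exist finite sets `U, V ⊆ ℤ` with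
`U − V = {1, …, 13^k}` and `|U + V| = 10^k`. -/
theorem stmt14 (k : ℕ) (hk : 1 ≤ k) :
    ∃ U V : Finset ℤ, U - V = Finset.Icc (1 : ℤ) (13 ^ k) ∧ (U + V).card = 10 ^ k := by
  obtain ⟨U, V, l, h1, h2, h3⟩ := aux_key k
  refine ⟨U + {1}, V, ?_, ?_⟩
  · have : U + ({1} : Finset ℤ) - V = (U - V) + {1} := by
      ext x
      simp only [Finset.mem_sub, Finset.mem_add, Finset.mem_singleton]
      constructor
      · rintro ⟨u, ⟨a, ha, o, rfl, rfl⟩, v, hv, rfl⟩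
        exact ⟨a - v, ⟨a, ha, v, hv, rfl⟩, 1, rfl, by ring⟩
      · rintro ⟨u, ⟨a, ha, v, hv, rfl⟩, o, rfl, rfl⟩
        exact ⟨a + 1, ⟨a, ha, 1, rfl, rfl⟩, v, hv, by ring⟩
    rw [this, h1]
    ext x
    simp only [Finset.mem_add, Finset.mem_Icc, Finset.mem_singleton]
    constructor
    · rintro ⟨a, ha, o, rfl, rfl⟩; omega
    · rintro ⟨ha, hb⟩; exact ⟨x - 1, by omega, 1, rfl, by ring⟩
  · have : U + ({1} : Finset ℤ) + V = (U + V) + {1} := add_right_comm U {1} V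
    have h4 : (U + V) + ({1} : Finset ℤ) = (U + V).image (· + 1) := by
      ext x
      simp only [Finset.mem_add, Finset.mem_singleton, Finset.mem_image]
      constructor
      · rintro ⟨a, ha, o, rfl, rfl⟩; exact ⟨a, ha, rfl⟩
      · rintro ⟨a, ha, rfl⟩; exact ⟨a, ha, 1, rfl, rfl⟩
    rw [this, h4, Finset.card_image_of_injective _ (add_left_injective 1), h2]
end
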